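/- Let 0 → V →i B →p A → 0 and 0 → V →j B̃ →q A → 0 be two equivalent abelian extensions of multiplicative 3-Hom-ρ-Lie algebras, with equivalence given by a 3-Hom-ρ-Lie algebra morphism F : B → B̃ satisfying F∘i = j and q∘F = p. Let δ be a section of p and δ′ a section of q. Then the induced representations coincide: [δ(f₁), δ(f₂), u]_B = [δ′(f₁), δ′(f₂), u]_{B̃} for all homogeneous f₁,f₂ ∈ A and u ∈ V. -/

import Mathlib

/-- A multiplicative-free `G`-graded `3`-Hom-`ρ`-Lie algebra over the field `k`:
a `G`-graded vector space `A = ⊕ₐ Aₐ` with an (internal) grading, a trilinear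
bracket which is degree-additive and `ρ`-skew-symmetric on homogeneous elements,
and an even linear map `φ` satisfying the `ρ`-fundamental identity. -/
structure ThreeHomRhoLie (k G A : Type*) [Field k] [AddCommGroup G] [DecidableEq G]
    [AddCommGroup A] [Module k A] (ρ : G → G → k) where
  grading : G → Submodule k A
  isInternal : DirectSum.IsInternal grading
  br : A →ₗ[k] A →ₗ[k] A →ₗ[k] A
  φ : A →ₗ[k] A
  φ_even : ∀ a : G, ∀ f ∈ grading a, φ f ∈ grading a
  br_deg : ∀ (a b c : G), ∀ f ∈ grading a, ∀ g ∈ grading b, ∀ h ∈ grading c,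
    br f g h ∈ grading (a + b + c)
  skew₁₂ : ∀ (a b : G), ∀ f ∈ grading a, ∀ g ∈ grading b, ∀ h : A,
    br f g h = (-(ρ a b)) • br g f h
  skew₂₃ : ∀ (b c : G), ∀ g ∈ grading b, ∀ h ∈ grading c, ∀ f : A,
    br f g h = (-(ρ b c)) • br f h g
  fund : ∀ (a₁ a₂ b₁ b₂ b₃ : G), ∀ f₁ ∈ grading a₁, ∀ f₂ ∈ grading a₂,
    ∀ g₁ ∈ grading b₁, ∀ g₂ ∈ grading b₂, ∀ g₃ ∈ grading b₃,
    br (φ f₁) (φ f₂) (br g₁ g₂ g₃) =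
      br (br f₁ f₂ g₁) (φ g₂) (φ g₃)
        + ρ (a₁ + a₂) b₁ • br (φ g₁) (br f₁ f₂ g₂) (φ g₃)
        + ρ (a₁ + a₂) (b₁ + b₂) • br (φ g₁) (φ g₂) (br f₁ f₂ g₃)

/-- Two equivalent abelian extensions of a multiplicative
`3`-Hom-`ρ`-Lie algebra `A` by `V` induce the same representation: for any sections
`δ` of `p` and `δ'` of `q`, one has `[δ f₁, δ f₂, u]_B = [δ' f₁, δ' f₂, u]_{B̃}`
(the left-hand side being transported to `B̃` by the equivalence `F`). -/
theorem equivalent_extensions_same_rep {k G V B B' A : Type*} [Field k]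
    [AddCommGroup G] [DecidableEq G] [AddCommGroup V] [Module k V]
    [AddCommGroup B] [Module k B] [AddCommGroup B'] [Module k B']
    [AddCommGroup A] [Module k A]
    (ρ : G → G → k)
    (hρ₁ : ∀ a b : G, ρ a b * ρ b a = 1)
    (hρ₂ : ∀ a b c : G, ρ (a + b) c = ρ a c * ρ b c)
    (LV : ThreeHomRhoLie k G V ρ) (LB : ThreeHomRhoLie k G B ρ)
    (LB' : ThreeHomRhoLie k G B' ρ) (LA : ThreeHomRhoLie k G A ρ)
    (hmulV : ∀ f g h : V, LV.φ (LV.br f g h) = LV.br (LV.φ f) (LV.φ g) (LV.φ h))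
    (hmulB : ∀ f g h : B, LB.φ (LB.br f g h) = LB.br (LB.φ f) (LB.φ g) (LB.φ h))
    (hmulB' : ∀ f g h : B', LB'.φ (LB'.br f g h) = LB'.br (LB'.φ f) (LB'.φ g) (LB'.φ h))
    (hmulA : ∀ f g h : A, LA.φ (LA.br f g h) = LA.br (LA.φ f) (LA.φ g) (LA.φ h))
    -- the first extension 0 → V →i B →p A → 0
    (i : V →ₗ[k] B) (p : B →ₗ[k] A)
    (hi_br : ∀ u v w : V, i (LV.br u v w) = LB.br (i u) (i v) (i w))
    (hi_φ : i ∘ₗ LV.φ = LB.φ ∘ₗ i)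
    (hi_deg : ∀ a : G, ∀ v ∈ LV.grading a, i v ∈ LB.grading a)
    (hp_br : ∀ x y z : B, p (LB.br x y z) = LA.br (p x) (p y) (p z))
    (hp_φ : p ∘ₗ LB.φ = LA.φ ∘ₗ p)
    (hp_deg : ∀ a : G, ∀ b ∈ LB.grading a, p b ∈ LA.grading a)
    (hexact : LinearMap.range i = LinearMap.ker p)
    (hinj : LinearMap.ker i = ⊥)
    (hsurj : LinearMap.range p = ⊤)
    (habelian : ∀ b : B, ∀ u v : V, LB.br b (i u) (i v) = 0)
    -- the second extension 0 → V →j B' →q A → 0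
    (j : V →ₗ[k] B') (q : B' →ₗ[k] A)
    (hj_br : ∀ u v w : V, j (LV.br u v w) = LB'.br (j u) (j v) (j w))
    (hj_φ : j ∘ₗ LV.φ = LB'.φ ∘ₗ j)
    (hj_deg : ∀ a : G, ∀ v ∈ LV.grading a, j v ∈ LB'.grading a)
    (hq_br : ∀ x y z : B', q (LB'.br x y z) = LA.br (q x) (q y) (q z))
    (hq_φ : q ∘ₗ LB'.φ = LA.φ ∘ₗ q)
    (hq_deg : ∀ a : G, ∀ b ∈ LB'.grading a, q b ∈ LA.grading a)
    (hexact' : LinearMap.range j = LinearMap.ker q)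
    (hinj' : LinearMap.ker j = ⊥)
    (hsurj' : LinearMap.range q = ⊤)
    (habelian' : ∀ b : B', ∀ u v : V, LB'.br b (j u) (j v) = 0)
    -- the equivalence F : B → B'
    (F : B →ₗ[k] B')
    (hF_br : ∀ x y z : B, F (LB.br x y z) = LB'.br (F x) (F y) (F z))
    (hF_φ : F ∘ₗ LB.φ = LB'.φ ∘ₗ F)
    (hFi : F ∘ₗ i = j) (hqF : q ∘ₗ F = p)
    -- the sections
    (δ : A →ₗ[k] B) (hδ : p ∘ₗ δ = LinearMap.id) (hδφ : δ ∘ₗ LA.φ = LB.φ ∘ₗ δ)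
    (δ' : A →ₗ[k] B') (hδ' : q ∘ₗ δ' = LinearMap.id)
    (hδ'φ : δ' ∘ₗ LA.φ = LB'.φ ∘ₗ δ') :
    ∀ (a₁ a₂ : G), ∀ f₁ ∈ LA.grading a₁, ∀ f₂ ∈ LA.grading a₂, ∀ u : V,
      F (LB.br (δ f₁) (δ f₂) (i u)) = LB'.br (δ' f₁) (δ' f₂) (j u) := by
  intro a₁ a₂ f₁ hf₁ f₂ hf₂ u
  -- key lemma: [j v, b, j u] = 0 for all v u b
  have key : ∀ (v u : V) (b : B'), LB'.br (j v) b (j u) = 0 := by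
    intro v u
    have hv : v ∈ ⨆ a, LV.grading a := by
      rw [LV.isInternal.submodule_iSup_eq_top]; trivial
    refine Submodule.iSup_induction (motive := fun v : V =>
        ∀ b : B', LB'.br (j v) b (j u) = 0) _ hv ?_ ?_ ?_
    · intro c v hvc b
      have hb : b ∈ ⨆ a, LB'.grading a := by
        rw [LB'.isInternal.submodule_iSup_eq_top]; trivial
      refine Submodule.iSup_induction (motive := fun b : B' =>
          LB'.br (j v) b (j u) = 0) _ hb ?_ ?_ ?_
      · intro d b hbd
        rw [LB'.skew₁₂ c d (j v) (hj_deg c v hvc) b hbd (j u), habelian', smul_zero]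
      · simp
      · intro x y hx hy
        simp [map_add, hx, hy]
    · intro b; simp
    · intro x y hx hy b
      simp only [map_add, LinearMap.add_apply]
      rw [hx b, hy b, add_zero]
  have hFi' : ∀ v : V, F (i v) = j v := fun v => congrArg (fun g : V →ₗ[k] B' => g v) hFi
  have hqF' : ∀ b : B, q (F b) = p b := fun b => congrArg (fun g : B →ₗ[k] A => g b) hqF
  have hδ'' : ∀ a : A, p (δ a) = a := fun a => congrArg (fun g : A →ₗ[k] A => g a) hδ
  have hδ''' : ∀ a : A, q (δ' a) = a := fun a => congrArg (fun g : A →ₗ[k] A => g a) hδ'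
  have hdiff : ∀ a : A, ∃ v : V, F (δ a) = δ' a + j v := by
    intro a
    have h0 : F (δ a) - δ' a ∈ LinearMap.ker q := by
      simp [LinearMap.mem_ker, map_sub, hqF', hδ'', hδ''']
    rw [← hexact'] at h0
    obtain ⟨v, hv⟩ := h0
    exact ⟨v, by rw [hv]; abel⟩
  obtain ⟨v₁, hv₁⟩ := hdiff f₁
  obtain ⟨v₂, hv₂⟩ := hdiff f₂
  rw [hF_br, hFi', hv₁, hv₂]
  simp only [map_add, LinearMap.add_apply]
  rw [habelian' (δ' f₁) v₂ u, habelian' (j v₁) v₂ u, key v₁ u (δ' f₂)]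
  abel
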